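/- The twirling of any operator Ω on C^d ⊗ C^d over the Heisenberg–Weyl group, Ω' = (1/d²) Σ_{u,v=0}^{d-1} (W(u,v)* ⊗ W(u,v)) Ω (W(u,v)* ⊗ W(u,v))†, is diagonal in the generalized Bell basis; i.e., Ω' = Σ_{u,v} λ_{u,v} |Φ_{u,v}⟩⟨Φ_{u,v}| where λ_{u,v} = ⟨Φ_{u,v}| Ω |Φ_{u,v}⟩. -/

import Mathlib

open Matrix Complex
open scoped Kronecker

/-- The cyclic shift operator `X` on `ℂ^d`. -/
noncomputable def shiftX (d : ℕ) : Matrix (Fin d) (Fin d) ℂ :=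
  Matrix.of fun i j => if (i : ℕ) = ((j : ℕ) + 1) % d then 1 else 0

/-- The clock operator `Z` on `ℂ^d`. -/
noncomputable def clockZ (d : ℕ) : Matrix (Fin d) (Fin d) ℂ :=
  Matrix.of fun i j => if i = j then Complex.exp (2 * Real.pi * Complex.I * (i : ℕ) / d) else 0

/-- The Heisenberg–Weyl operator `W(u,v) = X^u Z^v`. -/
noncomputable def weylW (d : ℕ) (u v : ℕ) : Matrix (Fin d) (Fin d) ℂ :=
  shiftX d ^ u * clockZ d ^ v

/-- The maximally entangled state `|Φ₊⟩ = (1/√d) ∑ |jj⟩` as a vector. -/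
noncomputable def bellPlus (d : ℕ) : Fin d × Fin d → ℂ :=
  fun p => if p.1 = p.2 then (1 / Real.sqrt d : ℝ) else 0

/-- The generalized Bell state `|Φ_{u,v}⟩ = (I ⊗ W(u,v)) |Φ₊⟩`. -/
noncomputable def bellState (d : ℕ) (u v : ℕ) : Fin d × Fin d → ℂ :=
  ((1 : Matrix (Fin d) (Fin d) ℂ) ⊗ₖ weylW d u v).mulVec (bellPlus d)



noncomputable def zet (d : ℕ) : ℂ := Complex.exp (2 * Real.pi * Complex.I / d)

lemma zet_ne_zero (d : ℕ) : zet d ≠ 0 := Complex.exp_ne_zero _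

lemma zet_pow_d {d : ℕ} (hd : d ≠ 0) : zet d ^ d = 1 := by
  have hdc : (d : ℂ) ≠ 0 := Nat.cast_ne_zero.mpr hd
  rw [zet, ← Complex.exp_nat_mul]
  have : (d : ℂ) * (2 * Real.pi * Complex.I / d) = 2 * Real.pi * Complex.I := by
    field_simp
  rw [this, Complex.exp_two_pi_mul_I]

lemma conj_zet_pow (d m : ℕ) : (starRingEnd ℂ) (zet d ^ m) = (zet d ^ m)⁻¹ := by
  rw [map_pow, ← inv_pow]
  congr 1
  rw [zet, ← Complex.exp_conj, ← Complex.exp_neg]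
  congr 1
  simp [map_div₀, map_ofNat]
  ring

lemma chi_orth {d : ℕ} (hd : d ≠ 0) (j k : Fin d) :
    ∑ v : Fin d, zet d ^ (j.val * v.val) * (starRingEnd ℂ) (zet d ^ (k.val * v.val)) =
      if j = k then (d : ℂ) else 0 := by
  have hz := zet_ne_zero d
  set x : ℂ := zet d ^ j.val * (zet d ^ k.val)⁻¹ with hxdef
  have hx : ∀ v : Fin d, zet d ^ (j.val * v.val) * (starRingEnd ℂ) (zet d ^ (k.val * v.val))
      = x ^ v.val := by
    intro v
    rw [hxdef, mul_pow, inv_pow, ← pow_mul, ← pow_mul, conj_zet_pow]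
  have hxd : x ^ d = 1 := by
    rw [hxdef, mul_pow, inv_pow, ← pow_mul, ← pow_mul, mul_comm j.val d, mul_comm k.val d,
      pow_mul, pow_mul, zet_pow_d hd, one_pow, one_pow, inv_one, mul_one]
  simp only [hx]
  rw [Fin.sum_univ_eq_sum_range (fun i => x ^ i) d]
  by_cases h : j = k
  · subst h
    have : x = 1 := mul_inv_cancel₀ (pow_ne_zero _ hz)
    simp [this]
  · rw [if_neg h, geom_sum_eq, hxd, sub_self, zero_div]
    intro hx1
    apply h
    have : zet d ^ j.val = zet d ^ k.val := by
      rwa [hxdef, mul_inv_eq_one₀ (pow_ne_zero _ hz)] at hx1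
    exact Fin.ext ((Complex.isPrimitiveRoot_exp d hd).pow_inj j.isLt k.isLt this)

open Fin.NatCast in
lemma shiftX_pow_apply {d : ℕ} [NeZero d] (n : ℕ) (i j : Fin d) :
    (shiftX d ^ n) i j = if i = j + (n : Fin d) then 1 else 0 := by
  induction n generalizing j with
  | zero => simp [Matrix.one_apply]
  | succ n ih =>
    rw [pow_succ, Matrix.mul_apply]
    have h1 : ∀ k : Fin d, shiftX d k j = if k = j + 1 then 1 else 0 := by
      intro k
      have hc : ((k : ℕ) = ((j : ℕ) + 1) % d) ↔ k = j + 1 := by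
        rw [Fin.ext_iff, Fin.val_add]
        have h1v : ((1 : Fin d) : ℕ) = 1 % d := rfl
        rw [h1v, Nat.add_mod_mod]
      simp only [shiftX, Matrix.of_apply]
      exact if_congr hc rfl rfl
    simp only [h1, mul_ite, mul_one, mul_zero]
    rw [Finset.sum_ite_eq' Finset.univ (j+1) (fun k => (shiftX d ^ n) i k)]
    simp only [Finset.mem_univ, if_true]
    rw [ih (j+1)]
    have : j + 1 + (n : Fin d) = j + ((n+1 : ℕ) : Fin d) := by
      push_cast
      abel
    rw [this]

lemma clockZ_eq (d : ℕ) : clockZ d = Matrix.diagonal (fun i : Fin d => zet d ^ (i : ℕ)) := by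
  ext i j
  simp only [clockZ, Matrix.of_apply, Matrix.diagonal_apply]
  split
  · rw [zet, ← Complex.exp_nat_mul]
    congr 1
    ring
  · rfl


open Fin.NatCast in
lemma weylW_apply {d : ℕ} [NeZero d] (u v : ℕ) (i j : Fin d) :
    weylW d u v i j = if i = j + (u : Fin d) then zet d ^ ((j : ℕ) * v) else 0 := by
  rw [weylW, clockZ_eq, Matrix.diagonal_pow, Matrix.mul_diagonal, shiftX_pow_apply]
  rw [ite_mul, zero_mul, one_mul, Pi.pow_apply, ← pow_mul]

open Fin.NatCast in
lemma bellState_apply {d : ℕ} [NeZero d] (u v : ℕ) (p : Fin d × Fin d) :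
    bellState d u v p =
      if p.2 = p.1 + (u : Fin d) then
        zet d ^ ((p.1 : ℕ) * v) * ((1 / Real.sqrt d : ℝ) : ℂ) else 0 := by
  obtain ⟨a, b⟩ := p
  rw [bellState, Matrix.mulVec, dotProduct, Fintype.sum_prod_type]
  have step1 : ∀ c e : Fin d,
      ((1 : Matrix (Fin d) (Fin d) ℂ) ⊗ₖ weylW d u v) (a, b) (c, e) * bellPlus d (c, e)
        = (if a = c then (1:ℂ) else 0) *
          (if c = e then weylW d u v b e * ((1 / Real.sqrt d : ℝ) : ℂ) else 0) := by
    intro c e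
    simp only [Matrix.kroneckerMap_apply, Matrix.one_apply, bellPlus]
    rw [mul_assoc]
    congr 1
    rw [mul_comm, ite_mul, zero_mul]
    exact if_congr Iff.rfl (mul_comm _ _) rfl
  simp only [step1]
  have step2 : ∀ c : Fin d,
      (∑ e : Fin d, (if a = c then (1:ℂ) else 0) *
        (if c = e then weylW d u v b e * ((1 / Real.sqrt d : ℝ) : ℂ) else 0))
      = (if a = c then (1:ℂ) else 0) *
          (weylW d u v b c * ((1 / Real.sqrt d : ℝ) : ℂ)) := by
    intro c
    rw [← Finset.mul_sum]
    congr 1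
    rw [Finset.sum_ite_eq Finset.univ c (fun e => weylW d u v b e * ((1 / Real.sqrt d : ℝ) : ℂ))]
    simp
  simp only [step2]
  simp only [ite_mul, one_mul, zero_mul]
  rw [Finset.sum_ite_eq Finset.univ a
    (fun c => weylW d u v b c * ((1 / Real.sqrt d : ℝ) : ℂ))]
  simp only [Finset.mem_univ, if_true]
  rw [weylW_apply, ite_mul, zero_mul]


lemma zet_pow_mod_mul {d : ℕ} (hd : d ≠ 0) (m t : ℕ) :
    zet d ^ ((m % d) * t) = zet d ^ (m * t) := by
  conv_rhs => rw [← Nat.mod_add_div m d]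
  have h1 : zet d ^ (d * (m / d) * t) = 1 := by
    rw [mul_assoc, pow_mul, zet_pow_d hd, one_pow]
  rw [add_mul, pow_add, h1, mul_one]

lemma chi_add {d : ℕ} (hd : d ≠ 0) (j k v : Fin d) :
    zet d ^ (((j + k : Fin d) : ℕ) * (v : ℕ)) =
      zet d ^ ((j : ℕ) * (v : ℕ)) * zet d ^ ((k : ℕ) * (v : ℕ)) := by
  rw [Fin.val_add, zet_pow_mod_mul hd, add_mul, pow_add]

lemma sum_pc {d : ℕ} (c₀ e₀ : Fin d) (f g : Fin d → ℂ) (F : Fin d × Fin d → ℂ) :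
    (∑ p : Fin d × Fin d,
      (if p.1 = c₀ then f p.1 else 0) * (if p.2 = e₀ then g p.2 else 0) * F p)
      = f c₀ * (g e₀ * F (c₀, e₀)) := by
  rw [Fintype.sum_prod_type]
  have inner : ∀ c : Fin d,
      (∑ e : Fin d, (if c = c₀ then f c else 0) * (if e = e₀ then g e else 0) * F (c, e))
      = (if c = c₀ then f c else 0) * (g e₀ * F (c, e₀)) := by
    intro c
    simp only [mul_assoc]
    rw [← Finset.mul_sum]
    congr 1
    simp only [ite_mul, zero_mul]
    rw [Finset.sum_ite_eq' Finset.univ e₀ (fun e => g e * F (c, e))]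
    simp
  rw [Finset.sum_congr rfl (fun c _ => inner c)]
  simp only [ite_mul, zero_mul]
  rw [Finset.sum_ite_eq' Finset.univ c₀ (fun c => f c * (g e₀ * F (c, e₀)))]
  simp

lemma sum_pc' {d : ℕ} (c₀ e₀ : Fin d) (f g : Fin d → ℂ) (F : Fin d × Fin d → ℂ) :
    (∑ p : Fin d × Fin d,
      F p * ((if p.1 = c₀ then f p.1 else 0) * (if p.2 = e₀ then g p.2 else 0)))
      = F (c₀, e₀) * (f c₀ * g e₀) := by
  have := sum_pc c₀ e₀ f g F
  calc (∑ p : Fin d × Fin d,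
      F p * ((if p.1 = c₀ then f p.1 else 0) * (if p.2 = e₀ then g p.2 else 0)))
      = ∑ p : Fin d × Fin d,
        (if p.1 = c₀ then f p.1 else 0) * (if p.2 = e₀ then g p.2 else 0) * F p := by
        apply Finset.sum_congr rfl; intro p _; ring
    _ = f c₀ * (g e₀ * F (c₀, e₀)) := this
    _ = F (c₀, e₀) * (f c₀ * g e₀) := by ring

lemma sum_diag_collapse {d : ℕ} (u : Fin d) (G : Fin d → ℂ) (F : Fin d × Fin d → ℂ) :
    (∑ p : Fin d × Fin d, F p * (if p.2 = p.1 + u then G p.1 else 0))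
      = ∑ c : Fin d, F (c, c + u) * G c := by
  rw [Fintype.sum_prod_type]
  apply Finset.sum_congr rfl
  intro c _
  simp only [mul_ite, mul_zero]
  rw [Finset.sum_ite_eq' Finset.univ (c + u) (fun e => F (c, e) * G c)]
  simp

lemma sum_diag_collapse' {d : ℕ} (u : Fin d) (G : Fin d → ℂ) (F : Fin d × Fin d → ℂ) :
    (∑ p : Fin d × Fin d, (if p.2 = p.1 + u then G p.1 else 0) * F p)
      = ∑ c : Fin d, G c * F (c, c + u) := by
  rw [Fintype.sum_prod_type]
  apply Finset.sum_congr rfl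
  intro c _
  simp only [ite_mul, zero_mul]
  rw [Finset.sum_ite_eq' Finset.univ (c + u) (fun e => G c * F (c, e))]
  simp

set_option maxHeartbeats 1600000 in
/-- twirling over the Heisenberg–Weyl group makes any operator
Bell-diagonal, with diagonal entries `⟨Φ_{u,v}|Ω|Φ_{u,v}⟩`. -/
theorem twirl_bell_diagonal (d : ℕ) (hd : 2 ≤ d)
    (Ω : Matrix (Fin d × Fin d) (Fin d × Fin d) ℂ) :
    ((d : ℂ) ^ 2)⁻¹ • ∑ u : Fin d, ∑ v : Fin d,
        ((weylW d u v).map star ⊗ₖ weylW d u v) * Ω *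
          ((weylW d u v).map star ⊗ₖ weylW d u v)ᴴ =
      ∑ u : Fin d, ∑ v : Fin d,
        (star (bellState d u v) ⬝ᵥ Ω.mulVec (bellState d u v)) •
          Matrix.vecMulVec (bellState d u v) (star (bellState d u v)) := by
  haveI : NeZero d := ⟨by omega⟩
  have hd0 : d ≠ 0 := by omega
  have hdc : (d : ℂ) ≠ 0 := Nat.cast_ne_zero.mpr hd0
  set r : ℂ := ((1 / Real.sqrt d : ℝ) : ℂ) with hrdef
  have hr2 : r * r = (d : ℂ)⁻¹ := by
    rw [hrdef, ← Complex.ofReal_mul, div_mul_div_comm, one_mul,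
      Real.mul_self_sqrt (Nat.cast_nonneg d), one_div]
    simp
  have hrstar : (starRingEnd ℂ) r = r := Complex.conj_ofReal _
  have hχ : ∀ (u v : Fin d) (i j : Fin d),
      weylW d u v i j = if i = j + u then zet d ^ ((j : ℕ) * (v : ℕ)) else 0 := by
    intro u v i j
    rw [weylW_apply, Fin.cast_val_eq_self]
  have hxs : ∀ (u v : Fin d) (p : Fin d × Fin d),
      bellState d u v p =
        if p.2 = p.1 + u then zet d ^ ((p.1 : ℕ) * (v : ℕ)) * r else 0 := by
    intro u v p
    rw [bellState_apply, Fin.cast_val_eq_self, hrdef]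
  ext ⟨a, b⟩ ⟨a', b'⟩
  simp only [Matrix.sum_apply, Matrix.smul_apply, Matrix.vecMulVec_apply,
    Pi.star_apply, smul_eq_mul]
  have hM : ∀ (u v : Fin d) (x y : Fin d × Fin d),
      ((weylW d u v).map star ⊗ₖ weylW d u v) x y =
        (if y.1 = x.1 - u then (starRingEnd ℂ) (zet d ^ ((y.1 : ℕ) * (v : ℕ))) else 0) *
          (if y.2 = x.2 - u then zet d ^ ((y.2 : ℕ) * (v : ℕ)) else 0) := by
    intro u v x y
    rw [Matrix.kroneckerMap_apply, Matrix.map_apply, hχ, hχ]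
    have hc : ∀ i j : Fin d, (i = j + u) ↔ (j = i - u) := by
      intro i j
      constructor
      · intro h; rw [h]; abel
      · intro h; rw [h]; abel
    rw [apply_ite star, star_zero]
    exact congrArg₂ (· * ·) (if_congr (hc x.1 y.1) (by rw [starRingEnd_apply]) rfl)
      (if_congr (hc x.2 y.2) rfl rfl)
  -- LHS per-(u,v) entry
  have hL : ∀ u v : Fin d,
      (((weylW d u v).map star ⊗ₖ weylW d u v) * Ω *
        ((weylW d u v).map star ⊗ₖ weylW d u v)ᴴ) (a, b) (a', b') =
      ((starRingEnd ℂ) (zet d ^ (((a - u : Fin d) : ℕ) * (v : ℕ))) *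
        (zet d ^ (((b - u : Fin d) : ℕ) * (v : ℕ)) *
          Ω (a - u, b - u) (a' - u, b' - u))) *
        (zet d ^ (((a' - u : Fin d) : ℕ) * (v : ℕ)) *
          (starRingEnd ℂ) (zet d ^ (((b' - u : Fin d) : ℕ) * (v : ℕ)))) := by
    intro u v
    rw [Matrix.mul_apply]
    have h1 : ∀ q, (((weylW d u v).map star ⊗ₖ weylW d u v) * Ω) (a, b) q
        = (starRingEnd ℂ) (zet d ^ (((a - u : Fin d) : ℕ) * (v : ℕ))) *
          (zet d ^ (((b - u : Fin d) : ℕ) * (v : ℕ)) * Ω (a - u, b - u) q) := by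
      intro q
      rw [Matrix.mul_apply]
      simp only [hM]
      exact sum_pc (a - u) (b - u)
        (fun c => (starRingEnd ℂ) (zet d ^ ((c : ℕ) * (v : ℕ))))
        (fun e => zet d ^ ((e : ℕ) * (v : ℕ))) (fun p => Ω p q)
    have h2 : ∀ q : Fin d × Fin d,
        ((weylW d u v).map star ⊗ₖ weylW d u v)ᴴ q (a', b')
        = (if q.1 = a' - u then zet d ^ ((q.1 : ℕ) * (v : ℕ)) else 0) *
          (if q.2 = b' - u then (starRingEnd ℂ) (zet d ^ ((q.2 : ℕ) * (v : ℕ))) else 0) := by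
      intro q
      rw [Matrix.conjTranspose_apply, hM]
      simp only [star_mul', apply_ite star, star_zero, starRingEnd_apply, star_star]
    simp only [h1, h2]
    rw [sum_pc' (a' - u) (b' - u)
      (fun c => zet d ^ ((c : ℕ) * (v : ℕ)))
      (fun e => (starRingEnd ℂ) (zet d ^ ((e : ℕ) * (v : ℕ))))
      (fun q => (starRingEnd ℂ) (zet d ^ (((a - u : Fin d) : ℕ) * (v : ℕ))) *
          (zet d ^ (((b - u : Fin d) : ℕ) * (v : ℕ)) * Ω (a - u, b - u) q))]
  -- sum over v of LHS entries
  have hphase : ∀ u : Fin d,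
      (∑ v : Fin d,
        ((starRingEnd ℂ) (zet d ^ (((a - u : Fin d) : ℕ) * (v : ℕ))) *
          (zet d ^ (((b - u : Fin d) : ℕ) * (v : ℕ)) *
            Ω (a - u, b - u) (a' - u, b' - u))) *
          (zet d ^ (((a' - u : Fin d) : ℕ) * (v : ℕ)) *
            (starRingEnd ℂ) (zet d ^ (((b' - u : Fin d) : ℕ) * (v : ℕ)))))
      = (if b + a' = a + b' then (d : ℂ) else 0) *
          Ω (a - u, b - u) (a' - u, b' - u) := by
    intro u
    have hterm : ∀ v : Fin d,
        ((starRingEnd ℂ) (zet d ^ (((a - u : Fin d) : ℕ) * (v : ℕ))) *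
          (zet d ^ (((b - u : Fin d) : ℕ) * (v : ℕ)) *
            Ω (a - u, b - u) (a' - u, b' - u))) *
          (zet d ^ (((a' - u : Fin d) : ℕ) * (v : ℕ)) *
            (starRingEnd ℂ) (zet d ^ (((b' - u : Fin d) : ℕ) * (v : ℕ))))
        = (zet d ^ ((((b - u) + (a' - u) : Fin d) : ℕ) * (v : ℕ)) *
            (starRingEnd ℂ) (zet d ^ ((((a - u) + (b' - u) : Fin d) : ℕ) * (v : ℕ)))) *
          Ω (a - u, b - u) (a' - u, b' - u) := by
      intro v
      rw [chi_add hd0, chi_add hd0, _root_.map_mul]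
      ring
    rw [Finset.sum_congr rfl (fun v _ => hterm v), ← Finset.sum_mul, chi_orth hd0]
    congr 2
    rw [sub_add_sub_comm, sub_add_sub_comm, sub_left_inj]
  -- RHS : the coefficient
  have hlam : ∀ u v : Fin d,
      star (bellState d u v) ⬝ᵥ Ω.mulVec (bellState d u v)
      = ∑ c : Fin d, ((starRingEnd ℂ) (zet d ^ ((c : ℕ) * (v : ℕ))) * r) *
          (∑ c' : Fin d, Ω (c, c + u) (c', c' + u) *
            (zet d ^ ((c' : ℕ) * (v : ℕ)) * r)) := by
    intro u v
    rw [dotProduct]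
    have hmv : ∀ p : Fin d × Fin d, Ω.mulVec (bellState d u v) p
        = ∑ c' : Fin d, Ω p (c', c' + u) * (zet d ^ ((c' : ℕ) * (v : ℕ)) * r) := by
      intro p
      rw [Matrix.mulVec, dotProduct]
      simp only [hxs]
      exact sum_diag_collapse u (fun c => zet d ^ ((c : ℕ) * (v : ℕ)) * r) (fun q => Ω p q)
    have hst : ∀ p : Fin d × Fin d, star (bellState d u v p)
        = if p.2 = p.1 + u then (starRingEnd ℂ) (zet d ^ ((p.1 : ℕ) * (v : ℕ))) * r else 0 := by
      intro p
      rw [hxs, apply_ite star, star_zero, star_mul', starRingEnd_apply]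
      rw [← starRingEnd_apply, ← starRingEnd_apply, hrstar, mul_comm]
    simp only [Pi.star_apply, hst, hmv]
    exact sum_diag_collapse' u
      (fun c => (starRingEnd ℂ) (zet d ^ ((c : ℕ) * (v : ℕ))) * r)
      (fun p => ∑ c' : Fin d, Ω p (c', c' + u) * (zet d ^ ((c' : ℕ) * (v : ℕ)) * r))
  -- RHS per-u sum over v
  have hR : ∀ u : Fin d,
      (∑ v : Fin d, (star (bellState d u v) ⬝ᵥ Ω.mulVec (bellState d u v)) *
        (bellState d u v (a, b) * star (bellState d u v (a', b'))))
      = if b = a + u then (if b' = a' + u then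
          ∑ c : Fin d, (d : ℂ) *
            (Ω (c, c + u) (c + (a' - a), (c + (a' - a)) + u) * (r * r * (r * r)))
          else 0) else 0 := by
    intro u
    have hstar2 : ∀ v : Fin d, star (bellState d u v (a', b'))
        = if b' = a' + u then (starRingEnd ℂ) (zet d ^ ((a' : ℕ) * (v : ℕ))) * r else 0 := by
      intro v
      rw [hxs, apply_ite star, star_zero, star_mul', ← starRingEnd_apply,
        ← starRingEnd_apply, hrstar, mul_comm]
    by_cases hP : b = a + u
    · by_cases hQ : b' = a' + u
      · rw [if_pos hP, if_pos hQ]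
        have hterm : ∀ v : Fin d,
            (star (bellState d u v) ⬝ᵥ Ω.mulVec (bellState d u v)) *
              (bellState d u v (a, b) * star (bellState d u v (a', b')))
            = ∑ c : Fin d, ∑ c' : Fin d,
                (zet d ^ (((c' + a : Fin d) : ℕ) * (v : ℕ)) *
                  (starRingEnd ℂ) (zet d ^ (((c + a' : Fin d) : ℕ) * (v : ℕ)))) *
                (Ω (c, c + u) (c', c' + u) * (r * r * (r * r))) := by
          intro v
          rw [hlam, hxs, hstar2, if_pos hP, if_pos hQ]
          rw [Finset.sum_mul]
          apply Finset.sum_congr rfl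
          intro c _
          rw [Finset.mul_sum, Finset.sum_mul]
          apply Finset.sum_congr rfl
          intro c' _
          rw [chi_add hd0, chi_add hd0, _root_.map_mul]
          ring
        rw [Finset.sum_congr rfl (fun v _ => hterm v)]
        rw [Finset.sum_comm]
        apply Finset.sum_congr rfl
        intro c _
        rw [Finset.sum_comm]
        have hinner : ∀ c' : Fin d,
            (∑ v : Fin d,
              (zet d ^ (((c' + a : Fin d) : ℕ) * (v : ℕ)) *
                (starRingEnd ℂ) (zet d ^ (((c + a' : Fin d) : ℕ) * (v : ℕ)))) *
              (Ω (c, c + u) (c', c' + u) * (r * r * (r * r))))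
            = (if c' = c + (a' - a) then (d : ℂ) else 0) *
                (Ω (c, c + u) (c', c' + u) * (r * r * (r * r))) := by
          intro c'
          rw [← Finset.sum_mul, chi_orth hd0]
          have hiff : (c' + a = c + a') ↔ (c' = c + (a' - a)) := by
            constructor
            · intro h
              have h5 : c' + a - a = c + a' - a := by rw [h]
              calc c' = c' + a - a := by abel
                _ = c + a' - a := h5
                _ = c + (a' - a) := by abel
            · intro h
              rw [h]; abel
          exact congrArg₂ (· * ·) (if_congr hiff rfl rfl) rfl
        rw [Finset.sum_congr rfl (fun c' _ => hinner c')]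
        simp only [ite_mul, zero_mul]
        rw [Finset.sum_ite_eq' Finset.univ (c + (a' - a))
          (fun c' => (d : ℂ) * (Ω (c, c + u) (c', c' + u) * (r * r * (r * r))))]
        simp
      · rw [if_pos hP, if_neg hQ]
        apply Finset.sum_eq_zero
        intro v _
        rw [hstar2, if_neg hQ]
        ring
    · rw [if_neg hP]
      apply Finset.sum_eq_zero
      intro v _
      rw [hxs, if_neg hP]
      ring
  rw [Finset.sum_congr rfl (fun u (_ : u ∈ Finset.univ) => by
    rw [Finset.sum_congr rfl (fun v (_ : v ∈ Finset.univ) => hL u v), hphase u])]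
  rw [Finset.sum_congr rfl (fun u (_ : u ∈ Finset.univ) => hR u)]
  by_cases hcond : b + a' = a + b'
  · have hb' : b' = a' + (b - a) := by
      have h0 : a + b' = a + (a' + (b - a)) := by rw [← hcond]; abel
      exact add_left_cancel h0
    have hcol : ∀ u : Fin d,
        (if b = a + u then (if b' = a' + u then
            ∑ c : Fin d, (d : ℂ) *
              (Ω (c, c + u) (c + (a' - a), (c + (a' - a)) + u) * (r * r * (r * r)))
            else 0) else 0)
        = if u = b - a then (if b' = a' + u then
            ∑ c : Fin d, (d : ℂ) *
              (Ω (c, c + u) (c + (a' - a), (c + (a' - a)) + u) * (r * r * (r * r)))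
            else 0) else 0 := by
      intro u
      apply if_congr _ rfl rfl
      constructor
      · intro h; rw [h]; abel
      · intro h; rw [h]; abel
    rw [Finset.sum_congr rfl (fun u _ => hcol u)]
    rw [Finset.sum_ite_eq' Finset.univ (b - a) _]
    simp only [Finset.mem_univ, if_true]
    rw [if_pos hb']
    simp only [if_pos hcond]
    rw [← Finset.mul_sum, ← Finset.mul_sum]
    have hsum : (∑ u : Fin d, Ω (a - u, b - u) (a' - u, b' - u))
        = ∑ c : Fin d, Ω (c, c + (b - a)) (c + (a' - a), (c + (a' - a)) + (b - a)) := by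
      apply Fintype.sum_equiv (Equiv.subLeft a)
        (fun u => Ω (a - u, b - u) (a' - u, b' - u))
        (fun c => Ω (c, c + (b - a)) (c + (a' - a), (c + (a' - a)) + (b - a)))
      intro u
      simp only [Equiv.subLeft_apply]
      have h2 : b - u = (a - u) + (b - a) := by abel
      have h3 : a' - u = (a - u) + (a' - a) := by abel
      have h4 : b' - u = ((a - u) + (a' - a)) + (b - a) := by rw [hb']; abel
      rw [h2, h3, h4]
    rw [hsum, ← Finset.sum_mul, hr2]
    ring
  · rw [if_neg hcond]
    simp only [zero_mul, Finset.sum_const_zero, mul_zero]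
    symm
    apply Finset.sum_eq_zero
    intro u _
    by_cases h1 : b = a + u
    · by_cases h2 : b' = a' + u
      · exact absurd (by rw [h1, h2]; abel) hcond
      · rw [if_pos h1, if_neg h2]
    · rw [if_neg h1]
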